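/- Let b : X → ℝ, let χ₀ be differentiable at every point of s with (Lχ₀)(x) + q(x)·χ₀(x) = b(x) for all x ∈ s, let η be differentiable at every point of s with (Lη)(x) + q(x)·η(x) = 0 for all x ∈ s, let φ₁, …, φₘ be differentiable at every point of s with (Lφᵢ)(x) = 0 for all x ∈ s and all i, and let f : ℝᵐ → ℝ be differentiable. Then the function χ(x) = χ₀(x) + η(x)·f(φ₁(x), …, φₘ(x)) satisfies (Lχ)(x) + q(x)·χ(x) = b(x) for all x ∈ s. -/

import Mathlib

/-- The general solution of the totally linear equation: χ = χ₀ + η·f(φ₁,…,φₘ)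
solves (L+q)χ = b on s. -/
theorem general_solution_totally_linear
    {X : Type*} [NormedAddCommGroup X] [NormedSpace ℝ X]
    (s : Set X) (hs : IsOpen s) (a : X → X) (q b : X → ℝ) (χ₀ η : X → ℝ)
    (hχ₀d : ∀ x ∈ s, DifferentiableAt ℝ χ₀ x)
    (hχ₀eq : ∀ x ∈ s, fderiv ℝ χ₀ x (a x) + q x * χ₀ x = b x)
    (hηd : ∀ x ∈ s, DifferentiableAt ℝ η x)
    (hηeq : ∀ x ∈ s, fderiv ℝ η x (a x) + q x * η x = 0)
    (m : ℕ) (φ : Fin m → X → ℝ)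
    (hφd : ∀ i, ∀ x ∈ s, DifferentiableAt ℝ (φ i) x)
    (hφeq : ∀ i, ∀ x ∈ s, fderiv ℝ (φ i) x (a x) = 0)
    (f : (Fin m → ℝ) → ℝ) (hf : Differentiable ℝ f) :
    ∀ x ∈ s,
      fderiv ℝ (fun y => χ₀ y + η y * f (fun i => φ i y)) x (a x)
          + q x * (χ₀ x + η x * f (fun i => φ i x)) = b x := by
  intro x hx
  set Φ : X → (Fin m → ℝ) := fun y i => φ i y with hΦ
  have hΦd : DifferentiableAt ℝ Φ x := differentiableAt_pi.2 fun i => hφd i x hx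
  have hgd : DifferentiableAt ℝ (fun y => f (Φ y)) x := (hf (Φ x)).comp x hΦd
  have hΦa : fderiv ℝ Φ x (a x) = 0 := by
    funext i
    have := fderiv_pi (𝕜 := ℝ) (φ := fun i => φ i) (fun i => hφd i x hx)
    rw [show Φ = fun y i => φ i y from rfl]
    simp [this, ContinuousLinearMap.pi_apply, hφeq i x hx]
  have hga : fderiv ℝ (fun y => f (Φ y)) x (a x) = 0 := by
    rw [show (fun y => f (Φ y)) = f ∘ Φ from rfl, fderiv_comp x (hf (Φ x)) hΦd]
    simp [hΦa]
  have hprod : fderiv ℝ (fun y => η y * f (Φ y)) x (a x)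
      = fderiv ℝ η x (a x) * f (Φ x) + η x * fderiv ℝ (fun y => f (Φ y)) x (a x) := by
    rw [fderiv_fun_mul (hηd x hx) hgd]
    simp; ring
  have hsum : fderiv ℝ (fun y => χ₀ y + η y * f (Φ y)) x (a x)
      = fderiv ℝ χ₀ x (a x) + fderiv ℝ (fun y => η y * f (Φ y)) x (a x) := by
    rw [fderiv_fun_add (hχ₀d x hx) ((hηd x hx).fun_mul hgd)]
    simp
  show fderiv ℝ (fun y => χ₀ y + η y * f (Φ y)) x (a x) + q x * (χ₀ x + η x * f (Φ x)) = b x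
  rw [hsum, hprod, hga]
  have h1 := hχ₀eq x hx
  have h2 := hηeq x hx
  linear_combination h1 + f (Φ x) * h2
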